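/- Suppose τ > 0, δ = (1+√(1+4τ'))/2 where τ_N = τ' + δ (i.e., δ² = τ_N), and constants Δ > 0, η_j for j ∈ [n,N] satisfy the SPGM construction with f_N − f_⋆ = (LΔ/2)(2δ_N − 1)η_N and ‖x₀ − z_{N+1}‖² = Δ(1 + Σ_{j=n}^{N} δ_j² η_j). Then f_N − f_⋆ = (L/(2τ_{n,N}))‖x₀ − z_{N+1}‖². -/

import Mathlib

theorem spgm_exact_suboptimality (N n : ℕ) (hnN : n ≤ N) (τhalf : ℝ) (hτ : 0 < τhalf)
    (δ τ η : ℕ → ℝ)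
    (hδ : ∀ i, n ≤ i → i ≤ N →
      δ i = if i < N then 1 + Real.sqrt (1 + 2 * (if i = n then τhalf else τ (i - 1)))
            else (1 + Real.sqrt (1 + 4 * (if i = n then τhalf else τ (i - 1)))) / 2)
    (hτrec : ∀ i, n ≤ i → i ≤ N →
      τ i = (if i = n then τhalf else τ (i - 1)) + δ i)
    (hηn : η n = 1 / (2 * τhalf * δ n))
    (hηi : ∀ i, n < i → i ≤ N →
      η i = (1 + ∑ j ∈ Finset.Ico n i, (δ j) ^ 2 * η j) / (2 * τ (i - 1) * δ i))
    (L Δ : ℝ) (hL : 0 < L) (hΔ : 0 < Δ)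
    (fN fstar D2 : ℝ)
    (hfN : fN - fstar = L * Δ / 2 * ((2 * δ N - 1) * η N))
    (hD2 : D2 = Δ * (1 + ∑ j ∈ Finset.Icc n N, (δ j) ^ 2 * η j)) :
    fN - fstar = L / (2 * τ N) * D2 := by
  -- δ is positive on [n,N]
  have hδpos : ∀ i, n ≤ i → i ≤ N → 0 < δ i := by
    intro i h1 h2
    rw [hδ i h1 h2]
    split <;> positivity
  -- τ is positive on [n,N]
  have hτpos : ∀ i, n ≤ i → i ≤ N → 0 < τ i := by
    intro i h1
    induction i, h1 using Nat.le_induction with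
    | base => intro h2; rw [hτrec n le_rfl h2, if_pos rfl]
              exact add_pos hτ (hδpos n le_rfl h2)
    | succ i hi ih =>
      intro h2
      rw [hτrec (i+1) (Nat.le_succ_of_le hi) h2, if_neg (by omega)]
      simp only [Nat.add_sub_cancel]
      exact add_pos (ih (Nat.le_of_succ_le h2)) (hδpos (i+1) (Nat.le_succ_of_le hi) h2)
  set τ' := if N = n then τhalf else τ (N - 1) with hτ'def
  have hτ'pos : 0 < τ' := by
    rw [hτ'def]; split
    · exact hτ
    · exact hτpos (N-1) (by omega) (by omega)
  -- δ N formula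
  have hδN : δ N = (1 + Real.sqrt (1 + 4 * τ')) / 2 := by
    rw [hδ N hnN le_rfl, if_neg (lt_irrefl N)]
  have hsq : (δ N) ^ 2 = τ' + δ N := by
    have hs : Real.sqrt (1 + 4 * τ') ^ 2 = 1 + 4 * τ' := by
      rw [Real.sq_sqrt]; linarith
    rw [hδN]; nlinarith [hs]
  have hτN : τ N = τ' + δ N := hτrec N hnN le_rfl
  set S := ∑ j ∈ Finset.Ico n N, (δ j) ^ 2 * η j with hS
  -- η N
  have hηN : η N = (1 + S) / (2 * τ' * δ N) := by
    rcases eq_or_lt_of_le hnN with h | h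
    · subst h
      simp [hS, hτ'def, hηn]
    · rw [hηi N h le_rfl, hτ'def, if_neg (by omega)]
  -- sum over Icc
  have hIcc : ∑ j ∈ Finset.Icc n N, (δ j) ^ 2 * η j = S + (δ N) ^ 2 * η N := by
    rw [← Finset.Ico_add_one_right_eq_Icc, Finset.sum_Ico_succ_top hnN]
  have hδNpos : 0 < δ N := hδpos N hnN le_rfl
  have hτNpos : 0 < τ N := hτpos N hnN le_rfl
  rw [hfN, hD2, hIcc, hηN, hτN]
  have h1 : δ N ≠ 0 := ne_of_gt hδNpos
  have h2 : τ' ≠ 0 := ne_of_gt hτ'pos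
  have h3 : τ' + δ N ≠ 0 := by rw [hτN] at hτNpos; exact ne_of_gt hτNpos
  field_simp
  linear_combination (1 + S) * hsq
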